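/- arXiv:math/0504121 — 8 statements merged into one kernel-verified Lean document; each statement's English description precedes it below -/
import Mathlib

section
/- For every integer n ≥ 1 and every integer r with 0 ≤ r < n(n+1), there exist integers a and b with r = a·n + b·(n+1) and |a| + |b| ≤ n. -/
theorem stmt_0 (n r : ℤ) (hn : 1 ≤ n) (hr0 : 0 ≤ r) (hr : r < n * (n + 1)) :
    ∃ a b : ℤ, r = a * n + b * (n + 1) ∧ |a| + |b| ≤ n := by
  have hn0 : 0 < n := hn
  set b0 := r % n with hb0
  set q := r / n with hq
  have hmod : 0 ≤ b0 := Int.emod_nonneg r (by omega)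
  have hmlt : b0 < n := Int.emod_lt_of_pos r hn0
  have hdiv : n * q + b0 = r := Int.mul_ediv_add_emod r n
  have hq0 : 0 ≤ q := Int.ediv_nonneg hr0 (le_of_lt hn0)
  have hqn : q ≤ n := by
    by_contra h
    push_neg at h
    have : n * (n + 1) ≤ n * q := by
      apply mul_le_mul_of_nonneg_left (by omega) (le_of_lt hn0)
    omega
  by_cases h : |q - b0| + b0 ≤ n
  · exact ⟨q - b0, b0, by rw [← hdiv]; ring, by rwa [abs_of_nonneg hmod]⟩
  · push_neg at h
    rcases abs_cases (q - b0) with ⟨he, _⟩ | ⟨he, _⟩ <;> rw [he] at h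
    · omega
    · refine ⟨q - b0 + (n + 1), b0 - n, by rw [← hdiv]; ring, ?_⟩
      rw [abs_of_nonneg (by omega), abs_of_nonpos (by omega)]
      omega
end

section
/- For every integer m ≥ 1 and all integers a, b, if m = a·(2m) + b·(2m+1) then |a| + |b| ≥ 2m. -/
theorem stmt_1 (m a b : ℤ) (hm : 1 ≤ m) (h : m = a * (2 * m) + b * (2 * m + 1)) :
    |a| + |b| ≥ 2 * m := by
  set k : ℤ := -(a + b) with hk
  have hb : b = m + 2 * m * k := by simp only [hk]; linarith [h]
  have ha : a = -m - (2 * m + 1) * k := by simp only [hk]; nlinarith [h]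
  rcases lt_trichotomy k 0 with hk0 | hk0 | hk0
  · have hk1 : k ≤ -1 := by omega
    have hbneg : b ≤ -m := by nlinarith
    have hapos : a ≥ m + 1 := by nlinarith
    rw [abs_of_nonneg (by linarith), abs_of_nonpos (by linarith)]
    linarith
  · rw [hk0] at ha hb; simp at ha hb
    rw [abs_of_nonpos (by linarith), abs_of_nonneg (by linarith)]
    linarith
  · have hk1 : 1 ≤ k := by omega
    have hbpos : b ≥ 3 * m := by nlinarith
    have haneg : a ≤ -(3 * m) - 1 := by nlinarith
    rw [abs_of_nonpos (by linarith), abs_of_nonneg (by linarith)]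
    linarith
end

section
/- For every integer m ≥ 1 and all integers a, b, if m = a·(2m) + b·(2m−1) then |a| + |b| ≥ 2m − 1. -/
theorem stmt_2 (m a b : ℤ) (hm : 1 ≤ m) (h : m = a * (2 * m) + b * (2 * m - 1)) :
    |a| + |b| ≥ 2 * m - 1 := by
  have hb : b = 2 * m * (a + b) - m := by linear_combination h
  have ha : a = m - (2 * m - 1) * (a + b) := by linear_combination -h
  rcases le_or_gt (a + b) 0 with hs | hs
  · have ha' : 0 ≤ a := by nlinarith
    have hb' : b ≤ 0 := by nlinarith
    rw [abs_of_nonneg ha', abs_of_nonpos hb']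
    nlinarith
  · have hs1 : 1 ≤ a + b := hs
    have ha' : a ≤ 0 := by nlinarith
    have hb' : 0 ≤ b := by nlinarith
    rw [abs_of_nonpos ha', abs_of_nonneg hb']
    nlinarith
end

section
/- For every integer m ≥ 1, the minimum of |a| + |b| over all pairs of integers (a, b) with a·(2m) + b·(2m+1) = m equals 2m. -/
theorem stmt_3 (m : ℤ) (hm : 1 ≤ m) :
    IsLeast {k : ℤ | ∃ a b : ℤ, a * (2 * m) + b * (2 * m + 1) = m ∧ k = |a| + |b|}
      (2 * m) := by
  constructor
  · refine ⟨-m, m, by ring, ?_⟩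
    rw [abs_neg, abs_of_nonneg (by linarith)]
    ring
  · rintro k ⟨a, b, h, rfl⟩
    set t : ℤ := -(a + b) with ht
    have hb : b = m + 2 * m * t := by simp only [ht]; nlinarith [h]
    have ha : a = -m - t * (2 * m + 1) := by simp only [ht]; nlinarith [h]
    rcases lt_trichotomy t 0 with htc | htc | htc
    · have ht1 : t ≤ -1 := by omega
      nlinarith [le_abs_self a, neg_abs_le a, le_abs_self b, neg_abs_le b]
    · rw [htc] at ha hb
      have ha' : a = -m := by linarith
      have hb' : b = m := by linarith
      rw [ha', hb', abs_neg, abs_of_nonneg (by linarith)]; linarith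
    · have ht1 : 1 ≤ t := htc
      nlinarith [le_abs_self a, neg_abs_le a, le_abs_self b, neg_abs_le b]
end

section
/- For every integer m ≥ 1, the minimum of |a| + |b| over all pairs of integers (a, b) with a·(2m) + b·(2m−1) = m equals 2m − 1. -/
theorem stmt_4 (m : ℤ) (hm : 1 ≤ m) :
    IsLeast {k : ℤ | ∃ a b : ℤ, a * (2 * m) + b * (2 * m - 1) = m ∧ k = |a| + |b|}
      (2 * m - 1) := by
  constructor
  · refine ⟨1 - m, m, by ring, ?_⟩
    rw [abs_of_nonpos (by linarith), abs_of_nonneg (by linarith)]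
    ring
  · rintro k ⟨a, b, heq, rfl⟩
    have ha1 : a ≤ |a| := le_abs_self a
    have ha2 : -a ≤ |a| := neg_le_abs a
    have hb1 : b ≤ |b| := le_abs_self b
    have hb2 : -b ≤ |b| := neg_le_abs b
    rcases le_or_gt 1 (a + b) with hs | hs
    · nlinarith [mul_nonneg (by linarith : (0:ℤ) ≤ 4 * m - 1) (by linarith : (0:ℤ) ≤ a + b - 1)]
    · have hs0 : a + b ≤ 0 := by omega
      nlinarith [mul_nonneg (by linarith : (0:ℤ) ≤ 4 * m - 1) (by linarith : (0:ℤ) ≤ -(a + b))]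
end

section
/- For every integer k ≥ 1 there exist a finite set S ⊆ ℤ generating ℤ and an element g ∈ ℤ such that, with d the word metric on ℤ with respect to S, every h ∈ ℤ with d(0, h) > d(0, g) satisfies d(g, h) > k. -/
private lemma coeff_to_list (v c : ℤ) :
    ∃ l : List ℤ, (∀ s ∈ l, s = v ∨ s = -v) ∧ l.sum = c * v ∧ l.length = c.natAbs := by
  rcases le_or_gt 0 c with hc | hc
  · refine ⟨List.replicate c.natAbs v, ?_, ?_, List.length_replicate ..⟩
    · intro s hs; left; exact List.eq_of_mem_replicate hs
    · rw [List.sum_replicate, nsmul_eq_mul, Int.natAbs_of_nonneg hc]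
  · refine ⟨List.replicate c.natAbs (-v), ?_, ?_, List.length_replicate ..⟩
    · intro s hs; right; exact List.eq_of_mem_replicate hs
    · rw [List.sum_replicate, nsmul_eq_mul]
      have h1 : (c.natAbs : ℤ) = -c := by omega
      rw [h1]; ring

private lemma coeffs_to_list (v w a b : ℤ) :
    ∃ l : List ℤ, (∀ s ∈ l, s = v ∨ s = -v ∨ s = w ∨ s = -w) ∧
      l.sum = a * v + b * w ∧ l.length = a.natAbs + b.natAbs := by
  obtain ⟨l1, h1, hs1, hl1⟩ := coeff_to_list v a
  obtain ⟨l2, h2, hs2, hl2⟩ := coeff_to_list w b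
  refine ⟨l1 ++ l2, ?_, ?_, ?_⟩
  · intro s hs
    rcases List.mem_append.mp hs with hmem | hmem
    · rcases h1 s hmem with h | h <;> tauto
    · rcases h2 s hmem with h | h <;> tauto
  · rw [List.sum_append, hs1, hs2]
  · rw [List.length_append, hl1, hl2]

private lemma list_to_coeffs (n : ℤ) :
    ∀ l : List ℤ, (∀ s ∈ l, s = n ∨ s = n + 1 ∨ s = -n ∨ s = -(n + 1)) →
      ∃ a b : ℤ, l.sum = a * n + b * (n + 1) ∧ a.natAbs + b.natAbs ≤ l.length := by
  intro l
  induction l with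
  | nil => intro _; exact ⟨0, 0, by simp, by simp⟩
  | cons x t ih =>
    intro hmem
    obtain ⟨a, b, hsum, hcost⟩ := ih (fun s hs => hmem s (List.mem_cons_of_mem _ hs))
    rcases hmem x (List.mem_cons_self ..) with hx | hx | hx | hx
    · refine ⟨a + 1, b, ?_, ?_⟩
      · rw [List.sum_cons, hsum, hx]; ring
      · simp only [List.length_cons]; omega
    · refine ⟨a, b + 1, ?_, ?_⟩
      · rw [List.sum_cons, hsum, hx]; ring
      · simp only [List.length_cons]; omega
    · refine ⟨a - 1, b, ?_, ?_⟩
      · rw [List.sum_cons, hsum, hx]; ring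
      · simp only [List.length_cons]; omega
    · refine ⟨a, b - 1, ?_, ?_⟩
      · rw [List.sum_cons, hsum, hx]; ring
      · simp only [List.length_cons]; omega

/-- For every k there is a finite generating set of ℤ and an element of
dead-end depth greater than k. -/
theorem stmt_9 (k : ℤ) (hk : 1 ≤ k) :
    ∃ (S : Finset ℤ) (g : ℤ), AddSubgroup.closure (S : Set ℤ) = ⊤ ∧
      ∀ d : ℤ → ℤ → ℕ,
        (∀ x y : ℤ,
          IsLeast {m : ℕ | ∃ l : List ℤ, (∀ s ∈ l, s ∈ S ∨ -s ∈ S) ∧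
            l.sum = y - x ∧ l.length = m} (d x y)) →
        ∀ h : ℤ, (d 0 h : ℤ) > (d 0 g : ℤ) → (d g h : ℤ) > k := by
  set m : ℤ := 2 * k + 1 with hm
  refine ⟨{2 * m, 2 * m + 1}, m, ?_, ?_⟩
  · -- closure is everything
    rw [AddSubgroup.eq_top_iff']
    intro x
    have hn : (2 * m : ℤ) ∈ AddSubgroup.closure (({2 * m, 2 * m + 1} : Finset ℤ) : Set ℤ) :=
      AddSubgroup.subset_closure (by simp)
    have hn1 : (2 * m + 1 : ℤ) ∈ AddSubgroup.closure (({2 * m, 2 * m + 1} : Finset ℤ) : Set ℤ) :=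
      AddSubgroup.subset_closure (by simp)
    have h1 : (1 : ℤ) ∈ AddSubgroup.closure (({2 * m, 2 * m + 1} : Finset ℤ) : Set ℤ) := by
      have := AddSubgroup.sub_mem _ hn1 hn
      simpa using this
    have := AddSubgroup.zsmul_mem _ h1 x
    simpa using this
  · intro d hd h hgt
    by_contra hle
    push_neg at hle
    -- mem4 : turn the "∈ S ∨ -s ∈ S" condition into the 4-way condition
    have mem4 : ∀ (l : List ℤ),
        (∀ s ∈ l, s ∈ ({2 * m, 2 * m + 1} : Finset ℤ) ∨ -s ∈ ({2 * m, 2 * m + 1} : Finset ℤ)) →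
        ∀ s ∈ l, s = 2 * m ∨ s = 2 * m + 1 ∨ s = -(2 * m) ∨ s = -(2 * m + 1) := by
      intro l hl s hs
      rcases hl s hs with hc | hc <;>
        simp only [Finset.mem_insert, Finset.mem_singleton] at hc <;> omega
    -- lower bound : 2 * m ≤ d 0 m
    have lower : 2 * m ≤ (d 0 m : ℤ) := by
      obtain ⟨l, hlmem, hlsum, hllen⟩ := (hd 0 m).1
      obtain ⟨a, b, hab, hcost⟩ := list_to_coeffs (2 * m) l (mem4 l hlmem)
      rw [sub_zero] at hlsum
      rw [hlsum] at hab
      -- m = a * (2m) + b * (2m + 1)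
      rcases lt_trichotomy (a + b) 0 with hs | hs | hs
      · -- a + b ≤ -1 : b ≥ 3m, a ≤ -1 - 3m
        have hint : (-(a + b) - 1) * (2 * m) ≥ 0 := by
          apply mul_nonneg <;> linarith
        have hb : 3 * m ≤ b := by nlinarith
        have ha : a ≤ -1 - 3 * m := by linarith
        omega
      · -- a + b = 0 : b = m, a = -m
        have hb : b = m := by
          have : m = (a + b) * (2 * m) + b := by linarith [hab]; 
          rw [hs] at this; linarith
        have ha : a = -m := by omega
        omega
      · -- a + b ≥ 1 : b ≤ -m, a ≥ 1 + m
        have hint : ((a + b) - 1) * (2 * m) ≥ 0 := by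
          apply mul_nonneg <;> linarith
        have hb : b ≤ -m := by nlinarith
        have ha : 1 + m ≤ a := by linarith
        omega
    -- from d g h ≤ k, get coefficients for h - m
    obtain ⟨l, hlmem, hlsum, hllen⟩ := (hd m h).1
    obtain ⟨a, b, hab, hcost⟩ := list_to_coeffs (2 * m) l (mem4 l hlmem)
    rw [hlsum] at hab
    -- h - m = a * (2m) + b * (2m+1), with natAbs a + natAbs b ≤ d m h ≤ k
    have hcostk : (a.natAbs : ℤ) + (b.natAbs : ℤ) ≤ k := by
      have h1 : (a.natAbs : ℤ) + (b.natAbs : ℤ) ≤ (l.length : ℤ) := by exact_mod_cast hcost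
      rw [hllen] at h1
      linarith
    -- produce a representation of h of cost ≤ 2m
    have upper : (d 0 h : ℤ) ≤ 2 * m := by
      have key : ∃ a' b' : ℤ, a' * (2 * m) + b' * (2 * m + 1) = h ∧
          (a'.natAbs : ℤ) + (b'.natAbs : ℤ) ≤ 2 * m := by
        rcases le_or_gt b a with hba | hba
        · refine ⟨a - m, m + b, ?_, ?_⟩
          · linear_combination -hab
          · omega
        · refine ⟨a + 1 + m, b - m, ?_, ?_⟩
          · linear_combination -hab
          · omega
      obtain ⟨a', b', hval, hc⟩ := key
      obtain ⟨l', hl'mem, hl'sum, hl'len⟩ := coeffs_to_list (2 * m) (2 * m + 1) a' b'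
      have hmem' : ∀ s ∈ l', s ∈ ({2 * m, 2 * m + 1} : Finset ℤ) ∨
          -s ∈ ({2 * m, 2 * m + 1} : Finset ℤ) := by
        intro s hs
        rcases hl'mem s hs with h1 | h1 | h1 | h1 <;>
          simp only [Finset.mem_insert, Finset.mem_singleton] <;> omega
      have hmemset : l'.length ∈ {m' : ℕ | ∃ l : List ℤ,
          (∀ s ∈ l, s ∈ ({2 * m, 2 * m + 1} : Finset ℤ) ∨
            -s ∈ ({2 * m, 2 * m + 1} : Finset ℤ)) ∧ l.sum = h - 0 ∧ l.length = m'} :=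
        ⟨l', hmem', by rw [hl'sum, sub_zero, hval], rfl⟩
      have hle' : d 0 h ≤ l'.length := (hd 0 h).2 hmemset
      have : (d 0 h : ℤ) ≤ (l'.length : ℤ) := by exact_mod_cast hle'
      rw [hl'len] at this
      push_cast at this hc
      linarith
    linarith
end

section
/- For every integer m ≥ 2, the dead-end depth of the element m in ℤ with respect to the generating set {2m, 2m+1} is at least 2m − 1. That is, with d the word metric for {2m, 2m+1}, every integer h with d(0, h) > d(0, m) satisfies d(m, h) ≥ 2m − 1. -/
lemma rep_nonneg (m h : ℤ) (hm : 2 ≤ m) (h0 : 0 ≤ h) (hlt : h < 2*m*(2*m+1)) :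
    ∃ a b : ℤ, h = a*(2*m) + b*(2*m+1) ∧ |a| + |b| ≤ 2*m := by
  have hn : (0:ℤ) < 2*m+1 := by linarith
  set k := (h + 2*m) / (2*m+1) with hkdef
  set r := (h + 2*m) % (2*m+1) with hrdef
  have hdiv : (2*m+1) * k + r = h + 2*m := Int.mul_ediv_add_emod (h + 2*m) (2*m+1)
  have hr0 : 0 ≤ r := Int.emod_nonneg _ (by linarith)
  have hrlt : r < 2*m+1 := Int.emod_lt_of_pos _ hn
  set s := 2*m - r with hsdef
  have hks : k*(2*m+1) - h = s := by linarith
  have hs0 : 0 ≤ s := by omega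
  have hs2 : s ≤ 2*m := by omega
  have hk0 : 0 ≤ k := Int.ediv_nonneg (by linarith) (by linarith)
  have hk2m : k ≤ 2*m := by
    by_contra hcon
    push_neg at hcon
    have h1 : 2*m + 1 ≤ k := by omega
    have h2 : (2*m+1)*(2*m+1) ≤ (2*m+1)*k :=
      mul_le_mul_of_nonneg_left h1 (by linarith)
    nlinarith
  rcases le_or_gt s k with hsk | hsk
  · refine ⟨s, k - s, by ring_nf; linarith, ?_⟩
    rw [abs_of_nonneg hs0, abs_of_nonneg (by linarith : (0:ℤ) ≤ k - s)]
    linarith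
  · rcases le_or_gt (2*s - k) (2*m) with hc | hc
    · refine ⟨s, k - s, by ring_nf; linarith, ?_⟩
      rw [abs_of_nonneg hs0, abs_of_nonpos (by linarith : k - s ≤ (0:ℤ))]
      linarith
    · refine ⟨s - (2*m+1), k - s + 2*m, by ring_nf; linarith, ?_⟩
      rw [abs_of_nonpos (by linarith : s - (2*m+1) ≤ (0:ℤ)),
        abs_of_nonneg (by linarith : (0:ℤ) ≤ k - s + 2*m)]
      linarith

lemma rep_all (m h : ℤ) (hm : 2 ≤ m) (hlt : |h| < 2*m*(2*m+1)) :
    ∃ a b : ℤ, h = a*(2*m) + b*(2*m+1) ∧ |a| + |b| ≤ 2*m := by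
  rcases le_or_gt 0 h with h0 | h0
  · exact rep_nonneg m h hm h0 (by rwa [abs_of_nonneg h0] at hlt)
  · obtain ⟨a, b, he, hc⟩ := rep_nonneg m (-h) hm (by linarith)
      (by rwa [abs_of_neg h0] at hlt)
    exact ⟨-a, -b, by linarith [he] <;> ring_nf, by simpa [abs_neg] using hc⟩

theorem stmt_10 (m : ℤ) (hm : 2 ≤ m) (d : ℤ → ℤ → ℤ)
    (hd : ∀ x y : ℤ,
      IsLeast {k : ℤ | ∃ a b : ℤ, y - x = a * (2 * m) + b * (2 * m + 1) ∧
        k = |a| + |b|} (d x y)) :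
    ∀ h : ℤ, d 0 h > d 0 m → d m h ≥ 2 * m - 1 := by
  intro h hgt
  -- d 0 m ≤ 2m
  have hdm_le : d 0 m ≤ 2*m := by
    refine (hd 0 m).2 ⟨-m, m, by ring, ?_⟩
    rw [abs_neg, abs_of_nonneg (by linarith : (0:ℤ) ≤ m)]
    ring
  -- d 0 m ≥ 2m
  have hdm_ge : 2*m ≤ d 0 m := by
    obtain ⟨a, b, heq, hkv⟩ := (hd 0 m).1
    have heq' : m = a*(2*m) + b*(2*m+1) := by linarith
    set t := a + b with ht
    have hb : b = m - 2*m*t := by nlinarith [heq']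
    have ha : a = (2*m+1)*t - m := by nlinarith [heq']
    rcases le_or_gt t 0 with htc | htc
    · have h1 : 0 ≤ -(2*m*t) := by nlinarith
      have h2 : (2*m+1)*t ≤ 0 := by nlinarith
      have hb' : m ≤ b := by linarith
      have ha' : a ≤ -m := by linarith
      rw [hkv, abs_of_nonpos (by linarith), abs_of_nonneg (by linarith)]
      linarith
    · have htc' : 1 ≤ t := htc
      have h1 : 2*m ≤ 2*m*t := by nlinarith
      have h2 : 2*m+1 ≤ (2*m+1)*t := by nlinarith
      have hb' : b ≤ -m := by linarith
      have ha' : m+1 ≤ a := by linarith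
      rw [hkv, abs_of_nonneg (by linarith), abs_of_nonpos (by linarith)]
      linarith
  have hdh : 2*m + 1 ≤ d 0 h := by linarith
  -- |h| ≥ 2m(2m+1)
  have hhbig : 2*m*(2*m+1) ≤ |h| := by
    by_contra hcon
    push_neg at hcon
    obtain ⟨a, b, he, hc⟩ := rep_all m h hm hcon
    have : d 0 h ≤ |a| + |b| := (hd 0 h).2 ⟨a, b, by linarith [he], rfl⟩
    linarith
  -- lower bound for d m h
  obtain ⟨a, b, heq, hkv⟩ := (hd m h).1
  have habs : |h - m| ≤ (|a| + |b|) * (2*m+1) := by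
    calc |h - m| = |a * (2*m) + b * (2*m+1)| := by rw [heq]
    _ ≤ |a * (2*m)| + |b * (2*m+1)| := abs_add_le _ _
    _ = |a| * (2*m) + |b| * (2*m+1) := by
        rw [abs_mul a (2*m), abs_mul b (2*m+1),
          abs_of_nonneg (by linarith : (0:ℤ) ≤ 2*m),
          abs_of_nonneg (by linarith : (0:ℤ) ≤ 2*m+1)]
    _ ≤ (|a| + |b|) * (2*m+1) := by nlinarith [abs_nonneg a, abs_nonneg b]
  have hhm : 2*m*(2*m+1) - m ≤ |h - m| := by
    have := abs_sub_abs_le_abs_sub h m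
    rw [abs_of_nonneg (by linarith : (0:ℤ) ≤ m)] at this
    linarith
  have hd0 : 0 ≤ d m h := by
    rw [hkv]; positivity
  by_contra hcon
  push_neg at hcon
  have hle : d m h ≤ 2*m - 2 := by linarith
  have : (|a| + |b|) * (2*m+1) ≤ (2*m-2)*(2*m+1) := by
    apply mul_le_mul_of_nonneg_right _ (by linarith)
    linarith [hkv ▸ hle]
  nlinarith
end

section
/- For all integers n ≥ 1 and q, r with |q| + |r| ≤ n, there exists a lattice path in ℤ² from (0, 0) to (q, r) of length at most 4n that meets every line x + y = i for each i ∈ {−n, ..., n}, where length is the number of unit ℓ¹-steps. -/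
theorem key (n q r : ℤ) (hn : 1 ≤ n) (hq : 0 ≤ q) (hs : 0 ≤ q + r)
    (hqr : |q| + |r| ≤ n) :
    ∃ (L : ℕ) (P : ℕ → ℤ × ℤ),
      P 0 = (0, 0) ∧ P L = (q, r) ∧
      (∀ j < L, |(P (j + 1)).1 - (P j).1| + |(P (j + 1)).2 - (P j).2| = 1) ∧
      (L : ℤ) ≤ 4 * n ∧
      (∀ i : ℤ, -n ≤ i → i ≤ n → ∃ j ≤ L, (P j).1 + (P j).2 = i) := by
  have hqn : q ≤ n := by
    have := le_abs_self q; have := abs_nonneg r; linarith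
  have hrn : r ≤ n := by
    have := le_abs_self r; have := abs_nonneg q; linarith
  have hrn' : -n ≤ r := by
    have := neg_abs_le r; have := abs_nonneg q; linarith
  have hsum : q + r ≤ n := by
    have := le_abs_self q; have := le_abs_self r; linarith
  clear hqr
  obtain ⟨L, hL⟩ : ∃ L : ℕ, (L:ℤ) = 4*n - q - r :=
    ⟨(4*n - q - r).toNat, Int.toNat_of_nonneg (by omega)⟩
  refine ⟨L,
    fun j => if (j:ℤ) ≤ n then ((0:ℤ), -(j:ℤ))
      else if (j:ℤ) ≤ n + q then ((j:ℤ) - n, -n)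
      else if (j:ℤ) ≤ 3*n then (q, (j:ℤ) - 2*n - q)
      else (q, 4*n - q - (j:ℤ)), ?_, ?_, ?_, ?_, ?_⟩
  · simp
    omega
  · dsimp only
    split_ifs <;> simp only [Prod.mk.injEq] <;> constructor <;> first | trivial | omega
  · intro j hj
    have hj' : (j : ℤ) < 4*n - q - r := by omega
    dsimp only
    push_cast
    split_ifs <;> simp only [Int.abs_eq_natAbs] <;> omega
  · omega
  · intro i h1 h2
    by_cases hi : i ≤ 0
    · obtain ⟨j, hjc⟩ : ∃ j : ℕ, (j:ℤ) = -i := ⟨(-i).toNat, Int.toNat_of_nonneg (by omega)⟩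
      refine ⟨j, by omega, ?_⟩
      dsimp only
      split_ifs <;> dsimp only <;> omega
    · obtain ⟨j, hjc⟩ : ∃ j : ℕ, (j:ℤ) = i + 2*n := ⟨(i + 2*n).toNat, Int.toNat_of_nonneg (by omega)⟩
      refine ⟨j, by omega, ?_⟩
      dsimp only
      split_ifs <;> dsimp only <;> omega

theorem key2 (n q r : ℤ) (hn : 1 ≤ n) (hs : 0 ≤ q + r) (hqr : |q| + |r| ≤ n) :
    ∃ (L : ℕ) (P : ℕ → ℤ × ℤ),
      P 0 = (0, 0) ∧ P L = (q, r) ∧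
      (∀ j < L, |(P (j + 1)).1 - (P j).1| + |(P (j + 1)).2 - (P j).2| = 1) ∧
      (L : ℤ) ≤ 4 * n ∧
      (∀ i : ℤ, -n ≤ i → i ≤ n → ∃ j ≤ L, (P j).1 + (P j).2 = i) := by
  by_cases hq : 0 ≤ q
  · exact key n q r hn hq hs hqr
  · have hr : 0 ≤ r := by
      by_contra hcon; push_neg at hcon; omega
    obtain ⟨L, P, h0, hE, hstep, hlen, hcov⟩ :=
      key n r q hn hr (by omega) (by rw [add_comm]; exact hqr)
    refine ⟨L, fun j => ((P j).2, (P j).1), ?_, ?_, ?_, hlen, ?_⟩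
    · simp only [h0]
    · simp only [hE]
    · intro j hj
      dsimp only
      rw [add_comm]
      exact hstep j hj
    · intro i h1 h2
      obtain ⟨j, hj, hsum⟩ := hcov i h1 h2
      exact ⟨j, hj, by dsimp only; omega⟩

theorem stmt_17 (n q r : ℤ) (hn : 1 ≤ n) (hqr : |q| + |r| ≤ n) :
    ∃ (L : ℕ) (P : ℕ → ℤ × ℤ),
      P 0 = (0, 0) ∧ P L = (q, r) ∧
      (∀ j < L, |(P (j + 1)).1 - (P j).1| + |(P (j + 1)).2 - (P j).2| = 1) ∧
      (L : ℤ) ≤ 4 * n ∧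
      (∀ i : ℤ, -n ≤ i → i ≤ n → ∃ j ≤ L, (P j).1 + (P j).2 = i) := by
  by_cases hs : 0 ≤ q + r
  · exact key2 n q r hn hs hqr
  · obtain ⟨L, P, h0, hE, hstep, hlen, hcov⟩ :=
      key2 n (-q) (-r) hn (by omega) (by rwa [abs_neg, abs_neg])
    refine ⟨L, fun j => (-(P j).1, -(P j).2), ?_, ?_, ?_, hlen, ?_⟩
    · simp only [h0]; norm_num
    · simp only [hE]; norm_num
    · intro j hj
      have := hstep j hj
      dsimp only
      show |-(P (j+1)).1 - -(P j).1| + |-(P (j+1)).2 - -(P j).2| = 1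
      rw [show -(P (j+1)).1 - -(P j).1 = -((P (j+1)).1 - (P j).1) by ring,
        show -(P (j+1)).2 - -(P j).2 = -((P (j+1)).2 - (P j).2) by ring, abs_neg, abs_neg]
      exact this
    · intro i h1 h2
      obtain ⟨j, hj, hsum⟩ := hcov (-i) (by omega) (by omega)
      exact ⟨j, hj, by dsimp only; omega⟩
end
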